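/- Under the assumptions of the previous statement (rank[F_k; H_k] = n, identity weights), the minimax estimate x̂_k = P_k^{-1} r_k, with r_0 = H_0' y_0 and r_k = F_k' C_{k-1}(P_{k-1} + C_{k-1}'C_{k-1})^{-1} r_{k-1} + H_k' y_k, coincides with the Kalman filter estimate x̂_{k|k} defined by x̂_{0|0} = P_{0|0} H_0' y_0 and x̂_{k|k} = P_{k|k} F_k' A_{k-1} C_{k-1} x̂_{k-1|k-1} + P_{k|k} H_k' y_k. -/

import Mathlib

open Matrix

-- full column rank gives mulVec injectivity at 0
lemma mulVec_eq_zero_of_rank {I : Type*} [Fintype I] {N : ℕ} (A : Matrix I (Fin N) ℝ)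
    (h : A.rank = N) {x : Fin N → ℝ} (hx : A *ᵥ x = 0) : x = 0 := by
  have hker : LinearMap.ker A.mulVecLin = ⊥ := by
    have h1 := LinearMap.finrank_range_add_finrank_ker A.mulVecLin
    rw [Matrix.rank] at h
    rw [h, Module.finrank_fintype_fun_eq_card] at h1
    simp only [Fintype.card_fin] at h1
    have : Module.finrank ℝ (LinearMap.ker A.mulVecLin) = 0 := by omega
    exact Submodule.finrank_eq_zero.mp this
  have : x ∈ LinearMap.ker A.mulVecLin := by simpa [Matrix.mulVecLin_apply] using hx
  simpa [hker] using this

lemma quad_form_eq {M N : ℕ} (A : Matrix (Fin M) (Fin N) ℝ) (W : Matrix (Fin M) (Fin M) ℝ)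
    (x : Fin N → ℝ) : x ⬝ᵥ ((Aᵀ * W * A) *ᵥ x) = (A *ᵥ x) ⬝ᵥ (W *ᵥ (A *ᵥ x)) := by
  rw [← Matrix.mulVec_mulVec, ← Matrix.mulVec_mulVec, Matrix.dotProduct_mulVec,
    Matrix.vecMul_transpose]

lemma posdef_aux {M Q N : ℕ} (F : Matrix (Fin M) (Fin N) ℝ) (H : Matrix (Fin Q) (Fin N) ℝ)
    (W : Matrix (Fin M) (Fin M) ℝ) (hW : W.PosDef)
    (hrank : (Matrix.fromRows F H).rank = N) :
    (Fᵀ * W * F + Hᵀ * H).PosDef := by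
  have hFWF : (Fᵀ * W * F).PosSemidef := by
    have := hW.posSemidef.mul_mul_conjTranspose_same Fᵀ
    simpa [Matrix.conjTranspose_eq_transpose_of_trivial, mul_assoc] using this
  have hHH : (Hᵀ * H).PosSemidef := by
    simpa using Matrix.posSemidef_conjTranspose_mul_self H
  refine Matrix.PosDef.of_dotProduct_mulVec_pos (hFWF.isHermitian.add hHH.isHermitian) fun x hx => ?_
  rw [add_mulVec, dotProduct_add]
  simp only [star_trivial]
  have e1 : x ⬝ᵥ ((Fᵀ * W * F) *ᵥ x) = (F *ᵥ x) ⬝ᵥ (W *ᵥ (F *ᵥ x)) := quad_form_eq F W x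
  have e2 : x ⬝ᵥ ((Hᵀ * H) *ᵥ x) = (H *ᵥ x) ⬝ᵥ (H *ᵥ x) := by
    have := quad_form_eq H 1 x; simpa using this
  rw [e1, e2]
  rcases eq_or_ne (F *ᵥ x) 0 with hFx | hFx
  · rcases eq_or_ne (H *ᵥ x) 0 with hHx | hHx
    · exfalso
      apply hx
      apply mulVec_eq_zero_of_rank _ hrank
      rw [Matrix.fromRows_mulVec, hFx, hHx]
      ext (i | i) <;> rfl
    · have h2 : 0 < (H *ᵥ x) ⬝ᵥ (H *ᵥ x) := by
        have := dotProduct_star_self_pos_iff.mpr hHx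
        simpa [star_trivial] using this
      have h1 : 0 ≤ (F *ᵥ x) ⬝ᵥ (W *ᵥ (F *ᵥ x)) := by rw [hFx]; simp
      linarith
  · have h1 : 0 < (F *ᵥ x) ⬝ᵥ (W *ᵥ (F *ᵥ x)) := by
      have := hW.dotProduct_mulVec_pos hFx
      simpa [star_trivial] using this
    have h2 : 0 ≤ (H *ᵥ x) ⬝ᵥ (H *ᵥ x) := by
      have := dotProduct_star_self_nonneg (H *ᵥ x)
      simpa [star_trivial] using this
    linarith

theorem stmt17 {m n q : ℕ}
    (F C : ℕ → Matrix (Fin m) (Fin n) ℝ) (Hm : ℕ → Matrix (Fin q) (Fin n) ℝ)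
    (hrank : ∀ k, (Matrix.fromRows (F k) (Hm k)).rank = n)
    (y : ℕ → Fin q → ℝ)
    (P Pkk : ℕ → Matrix (Fin n) (Fin n) ℝ)
    (hP0 : P 0 = (F 0)ᵀ * F 0 + (Hm 0)ᵀ * Hm 0)
    (hPk : ∀ k, P (k + 1) = (Hm (k + 1))ᵀ * Hm (k + 1)
      + (F (k + 1))ᵀ * (1 - C k * (P k + (C k)ᵀ * C k)⁻¹ * (C k)ᵀ) * F (k + 1))
    (hQ0 : (Pkk 0)⁻¹ = (F 0)ᵀ * F 0 + (Hm 0)ᵀ * Hm 0)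
    (hQk : ∀ k, (Pkk (k + 1))⁻¹
      = (F (k + 1))ᵀ * (1 + C k * Pkk k * (C k)ᵀ)⁻¹ * F (k + 1)
        + (Hm (k + 1))ᵀ * Hm (k + 1))
    (r : ℕ → Fin n → ℝ)
    (hr0 : r 0 = (Hm 0)ᵀ *ᵥ y 0)
    (hrk : ∀ k, r (k + 1)
      = (F (k + 1))ᵀ *ᵥ (C k *ᵥ ((P k + (C k)ᵀ * C k)⁻¹ *ᵥ r k))
        + (Hm (k + 1))ᵀ *ᵥ y (k + 1))
    (xh : ℕ → Fin n → ℝ)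
    (hx0 : xh 0 = Pkk 0 *ᵥ ((Hm 0)ᵀ *ᵥ y 0))
    (hxk : ∀ k, xh (k + 1)
      = Pkk (k + 1) *ᵥ ((F (k + 1))ᵀ *ᵥ ((1 + C k * Pkk k * (C k)ᵀ)⁻¹ *ᵥ (C k *ᵥ xh k)))
        + Pkk (k + 1) *ᵥ ((Hm (k + 1))ᵀ *ᵥ y (k + 1))) :
    ∀ k, (P k)⁻¹ *ᵥ r k = xh k := by
  -- strengthen induction
  suffices h : ∀ k, (P k).PosDef ∧ Pkk k = (P k)⁻¹ ∧ (P k)⁻¹ *ᵥ r k = xh k by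
    exact fun k => (h k).2.2
  intro k
  induction k with
  | zero =>
    have hPD : (P 0).PosDef := by
      rw [hP0]
      have := posdef_aux (F 0) (Hm 0) 1 Matrix.PosDef.one (hrank 0)
      simpa using this
    have hPkk : Pkk 0 = (P 0)⁻¹ := by
      have h1 : (Pkk 0)⁻¹ = P 0 := by rw [hQ0, hP0]
      have hu : IsUnit (Pkk 0).det := by
        rw [← Matrix.isUnit_nonsing_inv_det_iff, h1]
        exact hPD.det_pos.ne'.isUnit -- maybe needs fixing
      rw [← h1, Matrix.nonsing_inv_nonsing_inv _ hu]
    refine ⟨hPD, hPkk, ?_⟩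
    rw [hr0, hx0, hPkk]
  | succ k ih =>
    obtain ⟨hPD, hPkkEq, hEst⟩ := ih
    set Ck := C k
    have hPinv : (P k)⁻¹.PosDef := hPD.inv
    have hPu : IsUnit (P k).det := hPD.det_pos.ne'.isUnit
    -- M = 1 + C P⁻¹ Cᵀ
    set Mk : Matrix (Fin m) (Fin m) ℝ := 1 + Ck * (P k)⁻¹ * Ckᵀ with hMk
    have hMPD : Mk.PosDef := by
      apply Matrix.PosDef.add_posSemidef Matrix.PosDef.one
      have := hPinv.posSemidef.mul_mul_conjTranspose_same Ck
      simpa [mul_assoc] using this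
    -- N = P + CᵀC
    set Nk : Matrix (Fin n) (Fin n) ℝ := P k + Ckᵀ * Ck with hNk
    have hNPD : Nk.PosDef := by
      apply Matrix.PosDef.add_posSemidef hPD
      simpa using Matrix.posSemidef_conjTranspose_mul_self Ck
    have hNu : IsUnit Nk.det := hNPD.det_pos.ne'.isUnit
    have hMu : IsUnit Mk.det := hMPD.det_pos.ne'.isUnit
    -- key algebraic fact: Mk * Ck = Ck * (P k)⁻¹ * Nk
    have h0 : Ck * (P k)⁻¹ * P k = Ck := by
      rw [Matrix.mul_assoc, Matrix.nonsing_inv_mul _ hPu, Matrix.mul_one]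
    have hkey : Mk * Ck = Ck * (P k)⁻¹ * Nk := by
      rw [hMk, hNk, Matrix.add_mul, Matrix.one_mul, Matrix.mul_add, h0, ← Matrix.mul_assoc]
    -- identity 1 : Mk⁻¹ = 1 - Ck * Nk⁻¹ * Ckᵀ
    have hid1 : Mk⁻¹ = 1 - Ck * Nk⁻¹ * Ckᵀ := by
      apply Matrix.inv_eq_right_inv
      rw [Matrix.mul_sub, Matrix.mul_one, ← Matrix.mul_assoc Mk (Ck * Nk⁻¹) Ckᵀ,
        ← Matrix.mul_assoc Mk Ck Nk⁻¹, hkey, Matrix.mul_assoc (Ck * (P k)⁻¹) Nk Nk⁻¹,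
        Matrix.mul_nonsing_inv _ hNu, Matrix.mul_one, hMk, add_sub_cancel_right]
    -- identity 2 : Ck * Nk⁻¹ = Mk⁻¹ * (Ck * (P k)⁻¹)
    have hid2 : Ck * Nk⁻¹ = Mk⁻¹ * (Ck * (P k)⁻¹) := by
      have h1 : Mk⁻¹ * (Mk * Ck) * Nk⁻¹ = Mk⁻¹ * (Ck * (P k)⁻¹ * Nk) * Nk⁻¹ := by rw [hkey]
      rw [← Matrix.mul_assoc Mk⁻¹ Mk Ck, Matrix.nonsing_inv_mul _ hMu, Matrix.one_mul] at h1
      rw [Matrix.mul_assoc Mk⁻¹ (Ck * (P k)⁻¹ * Nk) Nk⁻¹,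
        Matrix.mul_assoc (Ck * (P k)⁻¹) Nk Nk⁻¹, Matrix.mul_nonsing_inv _ hNu,
        Matrix.mul_one] at h1
      exact h1
    -- rewrite recursion
    have hPnew : P (k + 1) = (F (k+1))ᵀ * Mk⁻¹ * F (k+1) + (Hm (k+1))ᵀ * Hm (k+1) := by
      rw [hPk k, ← hid1, add_comm]
    have hPDnew : (P (k+1)).PosDef := by
      rw [hPnew]
      exact posdef_aux _ _ _ hMPD.inv (hrank (k+1))
    have hQrw : (Pkk (k+1))⁻¹ = P (k+1) := by
      rw [hQk k, hPkkEq, ← hMk, hPnew]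
    have hPkkNew : Pkk (k+1) = (P (k+1))⁻¹ := by
      have hu : IsUnit (Pkk (k+1)).det := by
        rw [← Matrix.isUnit_nonsing_inv_det_iff, hQrw]
        exact hPDnew.det_pos.ne'.isUnit
      rw [← hQrw, Matrix.nonsing_inv_nonsing_inv _ hu]
    refine ⟨hPDnew, hPkkNew, ?_⟩
    rw [hrk k, hxk k, ← hPkkNew, Matrix.mulVec_add]
    congr 1
    rw [hPkkEq, ← hMk, ← hEst]
    simp only [Matrix.mulVec_mulVec]
    rw [hid2]
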